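/- Classical-style weak bisimilarity is a setoid predicate and an equivalence relation weaker than strong bisimilarity: (i) if r ≅ r', r ≈c r* and r* ≅ r*' then r' ≈c r*'; (ii) ≈c is reflexive (the paper proves this classically, using decidability of convergence), symmetric and transitive; (iii) r ≅ r* implies r ≈c r*. -/
import Mathlib


/-! Core definitions: delayful resumptions as an M-type, strong bisimilarity,
convergence, divergence, responsiveness, committedness, weak bisimilarities. -/

abbrev state := String → ℤ

/-- Shapes of the polynomial functor for delayful resumptions. -/
inductive RShape where
  | ret (σ : state)
  | inp
  | out (v : ℤ)
  | delay

/-- The polynomial functor X ↦ state ⊕ (ℤ → X) ⊕ (ℤ × X) ⊕ X. -/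
def ResPF : PFunctor :=
  ⟨RShape, fun s => match s with
    | .ret _ => PEmpty
    | .inp => ℤ
    | .out _ => PUnit
    | .delay => PUnit⟩

/-- Delayful resumptions: the final coalgebra (M-type) of `ResPF`. -/
def Res : Type := ResPF.M

namespace Res

def ret (σ : state) : Res := PFunctor.M.mk ⟨RShape.ret σ, PEmpty.elim⟩

def inp (f : ℤ → Res) : Res := PFunctor.M.mk ⟨RShape.inp, f⟩

def out (v : ℤ) (r : Res) : Res := PFunctor.M.mk ⟨RShape.out v, fun _ => r⟩

def delay (r : Res) : Res := PFunctor.M.mk ⟨RShape.delay, fun _ => r⟩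

/-- The silently diverging resumption ⊥, satisfying ⊥ = δ ⊥. -/
def bot : Res := PFunctor.M.corec (fun _ : Unit => ⟨RShape.delay, fun _ => ()⟩) ()

end Res

/-- One step of strong bisimilarity. -/
def BisimF (R : Res → Res → Prop) (r r₁ : Res) : Prop :=
  (∃ σ, r = Res.ret σ ∧ r₁ = Res.ret σ) ∨
  (∃ f f₁, r = Res.inp f ∧ r₁ = Res.inp f₁ ∧ ∀ v, R (f v) (f₁ v)) ∨
  (∃ v a a₁, r = Res.out v a ∧ r₁ = Res.out v a₁ ∧ R a a₁) ∨
  (∃ a a₁, r = Res.delay a ∧ r₁ = Res.delay a₁ ∧ R a a₁)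

/-- Strong bisimilarity ≅: the greatest relation closed under `BisimF`. -/
def Bisim (r r₁ : Res) : Prop :=
  ∃ R : Res → Res → Prop, (∀ x y, R x y → BisimF R x y) ∧ R r r₁

/-- Convergence r ⇓ r': r converges in finitely many delay steps to a
resumption that has terminated or performs an observable action. -/
inductive Conv : Res → Res → Prop where
  | ret (σ : state) : Conv (Res.ret σ) (Res.ret σ)
  | inp {f f₁ : ℤ → Res} : (∀ v, Bisim (f v) (f₁ v)) → Conv (Res.inp f) (Res.inp f₁)
  | out {v : ℤ} {r r₁ : Res} : Bisim r r₁ → Conv (Res.out v r) (Res.out v r₁)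
  | delay {r r' : Res} : Conv r r' → Conv (Res.delay r) r'

/-- Divergence r ⇑: r silently diverges (greatest predicate with δ r ⇑ whenever r ⇑). -/
def Diverge (r : Res) : Prop :=
  ∃ P : Res → Prop, (∀ x, P x → ∃ x', x = Res.delay x' ∧ P x') ∧ P r

/-- One step of responsiveness. -/
def RespF (P : Res → Prop) (r : Res) : Prop :=
  (∃ σ, Conv r (Res.ret σ)) ∨
  (∃ f, Conv r (Res.inp f) ∧ ∀ v, P (f v)) ∨
  (∃ v r', Conv r (Res.out v r') ∧ P r')

/-- Responsiveness ↓↓ r: the greatest predicate closed under `RespF`. -/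
def Resp (r : Res) : Prop :=
  ∃ P : Res → Prop, (∀ x, P x → RespF P x) ∧ P r

/-- One step of committedness: responsiveness with a divergence option. -/
def CommF (P : Res → Prop) (r : Res) : Prop :=
  (∃ σ, Conv r (Res.ret σ)) ∨
  (∃ f, Conv r (Res.inp f) ∧ ∀ v, P (f v)) ∨
  (∃ v r', Conv r (Res.out v r') ∧ P r') ∨
  Diverge r

/-- Committedness ⇕ r: the greatest predicate closed under `CommF`. -/
def Comm (r : Res) : Prop :=
  ∃ P : Res → Prop, (∀ x, P x → CommF P x) ∧ P r

/-- One step of (termination-sensitive) weak bisimilarity. -/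
def WBisimF (R : Res → Res → Prop) (r r₁ : Res) : Prop :=
  (∃ σ, Conv r (Res.ret σ) ∧ Conv r₁ (Res.ret σ)) ∨
  (∃ f f₁, Conv r (Res.inp f) ∧ Conv r₁ (Res.inp f₁) ∧ ∀ v, R (f v) (f₁ v)) ∨
  (∃ v a a₁, Conv r (Res.out v a) ∧ Conv r₁ (Res.out v a₁) ∧ R a a₁) ∨
  (∃ a a₁, r = Res.delay a ∧ r₁ = Res.delay a₁ ∧ R a a₁)

/-- Weak bisimilarity ≈: the greatest relation closed under `WBisimF`. -/
def WBisim (r r₁ : Res) : Prop :=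
  ∃ R : Res → Res → Prop, (∀ x y, R x y → WBisimF R x y) ∧ R r r₁

/-- The inductive part ≈↓(X) of the second formulation of weak bisimilarity. -/
inductive WBisimI (X : Res → Res → Prop) : Res → Res → Prop where
  | ret (σ : state) : WBisimI X (Res.ret σ) (Res.ret σ)
  | out {v r r₁} : X r r₁ → WBisimI X (Res.out v r) (Res.out v r₁)
  | inp {f f₁} : (∀ v, X (f v) (f₁ v)) → WBisimI X (Res.inp f) (Res.inp f₁)
  | delayL {r r₁} : WBisimI X r r₁ → WBisimI X (Res.delay r) r₁
  | delayR {r r₁} : WBisimI X r r₁ → WBisimI X r (Res.delay r₁)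

/-- One step of the second (Mendler-style) formulation ≈° of weak bisimilarity. -/
def WBisimOF (R : Res → Res → Prop) (r r₁ : Res) : Prop :=
  (∃ X : Res → Res → Prop, (∀ x y, X x y → R x y) ∧ WBisimI X r r₁) ∨
  (∃ a a₁, r = Res.delay a ∧ r₁ = Res.delay a₁ ∧ R a a₁)

/-- The second formulation ≈° of weak bisimilarity (induction nested into coinduction). -/
def WBisimO (r r₁ : Res) : Prop :=
  ∃ R : Res → Res → Prop, (∀ x y, R x y → WBisimOF R x y) ∧ R r r₁

/-- One step of classical-style weak bisimilarity. -/
def WBisimClF (R : Res → Res → Prop) (r r₁ : Res) : Prop :=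
  (∃ σ, Conv r (Res.ret σ) ∧ Conv r₁ (Res.ret σ)) ∨
  (∃ v a a₁, Conv r (Res.out v a) ∧ Conv r₁ (Res.out v a₁) ∧ R a a₁) ∨
  (∃ f f₁, Conv r (Res.inp f) ∧ Conv r₁ (Res.inp f₁) ∧ ∀ v, R (f v) (f₁ v)) ∨
  (Diverge r ∧ Diverge r₁)

/-- Classical-style weak bisimilarity ≈c. -/
def WBisimCl (r r₁ : Res) : Prop :=
  ∃ R : Res → Res → Prop, (∀ x y, R x y → WBisimClF R x y) ∧ R r r₁

section Aux

lemma mk_inj {x y : ResPF.Obj ResPF.M} (h : PFunctor.M.mk x = PFunctor.M.mk y) : x = y := by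
  have := congrArg PFunctor.M.dest h
  rwa [PFunctor.M.dest_mk, PFunctor.M.dest_mk] at this

lemma res_cases (r : Res) :
    (∃ σ, r = Res.ret σ) ∨ (∃ f, r = Res.inp f) ∨ (∃ v a, r = Res.out v a) ∨
    (∃ a, r = Res.delay a) := by
  have hd : PFunctor.M.mk (PFunctor.M.dest r) = r := PFunctor.M.mk_dest r
  rcases hde : PFunctor.M.dest r with ⟨s, c⟩
  rw [hde] at hd
  cases s with
  | ret σ =>
      left; exact ⟨σ, by rw [← hd]; unfold Res.ret; congr; funext x; exact x.elim⟩
  | inp => exact Or.inr (Or.inl ⟨c, by rw [← hd]; rfl⟩)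
  | out v =>
      refine Or.inr (Or.inr (Or.inl ⟨v, c PUnit.unit, ?_⟩))
      rw [← hd]; unfold Res.out; congr
  | delay =>
      refine Or.inr (Or.inr (Or.inr ⟨c PUnit.unit, ?_⟩))
      rw [← hd]; unfold Res.delay; congr

end Aux
section Inj

lemma ret_inj {σ σ'} (h : Res.ret σ = Res.ret σ') : σ = σ' := by
  unfold Res.ret at h
  have h1 := congrArg Sigma.fst (mk_inj h)
  injection h1 with h1

lemma inp_inj {f g} (h : Res.inp f = Res.inp g) : f = g := by
  unfold Res.inp at h
  injection mk_inj h with h1 h2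

lemma out_inj {v v' a a'} (h : Res.out v a = Res.out v' a') : v = v' ∧ a = a' := by
  unfold Res.out at h
  injection mk_inj h with h1 h2
  injection h1 with h1
  subst h1
  exact ⟨rfl, congrFun h2 PUnit.unit⟩

lemma delay_inj {a a'} (h : Res.delay a = Res.delay a') : a = a' := by
  unfold Res.delay at h
  injection mk_inj h with h1 h2
  exact congrFun h2 PUnit.unit

lemma ret_ne_inp {σ f} (h : Res.ret σ = Res.inp f) : False := by
  unfold Res.ret Res.inp at h; injection mk_inj h with h1 h2; injection h1

lemma ret_ne_out {σ v a} (h : Res.ret σ = Res.out v a) : False := by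
  unfold Res.ret Res.out at h; injection mk_inj h with h1 h2; injection h1

lemma ret_ne_delay {σ a} (h : Res.ret σ = Res.delay a) : False := by
  unfold Res.ret Res.delay at h; injection mk_inj h with h1 h2; injection h1

lemma inp_ne_out {f v a} (h : Res.inp f = Res.out v a) : False := by
  unfold Res.inp Res.out at h; injection mk_inj h with h1 h2; injection h1

lemma inp_ne_delay {f a} (h : Res.inp f = Res.delay a) : False := by
  unfold Res.inp Res.delay at h; injection mk_inj h with h1 h2; injection h1

lemma out_ne_delay {v a b} (h : Res.out v a = Res.delay b) : False := by
  unfold Res.out Res.delay at h; injection mk_inj h with h1 h2; injection h1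

end Inj
lemma inp_ne_ret {σ f} (h : Res.inp f = Res.ret σ) : False := ret_ne_inp h.symm
lemma out_ne_ret {σ v a} (h : Res.out v a = Res.ret σ) : False := ret_ne_out h.symm
lemma delay_ne_ret {σ a} (h : Res.delay a = Res.ret σ) : False := ret_ne_delay h.symm
lemma out_ne_inp {f v a} (h : Res.out v a = Res.inp f) : False := inp_ne_out h.symm
lemma delay_ne_inp {f a} (h : Res.delay a = Res.inp f) : False := inp_ne_delay h.symm
lemma delay_ne_out {v a b} (h : Res.delay b = Res.out v a) : False := out_ne_delay h.symm
section BisimLemmas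

lemma bisim_dest {r r₁ : Res} (h : Bisim r r₁) : BisimF Bisim r r₁ := by
  obtain ⟨R, hR, hr⟩ := h
  have mono : ∀ x y, R x y → Bisim x y := fun x y hxy => ⟨R, hR, hxy⟩
  rcases hR _ _ hr with ⟨σ, h1, h2⟩ | ⟨f, f₁, h1, h2, h3⟩ | ⟨v, a, a₁, h1, h2, h3⟩ | ⟨a, a₁, h1, h2, h3⟩
  · exact Or.inl ⟨σ, h1, h2⟩
  · exact Or.inr (Or.inl ⟨f, f₁, h1, h2, fun v => mono _ _ (h3 v)⟩)
  · exact Or.inr (Or.inr (Or.inl ⟨v, a, a₁, h1, h2, mono _ _ h3⟩))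
  · exact Or.inr (Or.inr (Or.inr ⟨a, a₁, h1, h2, mono _ _ h3⟩))

lemma bisim_refl (r : Res) : Bisim r r := by
  refine ⟨Eq, fun x y hxy => ?_, rfl⟩
  subst hxy
  rcases res_cases x with ⟨σ, rfl⟩ | ⟨f, rfl⟩ | ⟨v, a, rfl⟩ | ⟨a, rfl⟩
  · exact Or.inl ⟨σ, rfl, rfl⟩
  · exact Or.inr (Or.inl ⟨f, f, rfl, rfl, fun _ => rfl⟩)
  · exact Or.inr (Or.inr (Or.inl ⟨v, a, a, rfl, rfl, rfl⟩))
  · exact Or.inr (Or.inr (Or.inr ⟨a, a, rfl, rfl, rfl⟩))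

lemma bisim_symm {r r₁ : Res} (h : Bisim r r₁) : Bisim r₁ r := by
  refine ⟨fun x y => Bisim y x, fun x y hxy => ?_, h⟩
  rcases bisim_dest hxy with ⟨σ, h1, h2⟩ | ⟨f, f₁, h1, h2, h3⟩ | ⟨v, a, a₁, h1, h2, h3⟩ | ⟨a, a₁, h1, h2, h3⟩
  · exact Or.inl ⟨σ, h2, h1⟩
  · exact Or.inr (Or.inl ⟨f₁, f, h2, h1, fun v => h3 v⟩)
  · exact Or.inr (Or.inr (Or.inl ⟨v, a₁, a, h2, h1, h3⟩))
  · exact Or.inr (Or.inr (Or.inr ⟨a₁, a, h2, h1, h3⟩))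

lemma bisim_trans {r r₁ r₂ : Res} (h : Bisim r r₁) (h' : Bisim r₁ r₂) : Bisim r r₂ := by
  refine ⟨fun x z => ∃ y, Bisim x y ∧ Bisim y z, fun x z ⟨y, hxy, hyz⟩ => ?_, r₁, h, h'⟩
  rcases bisim_dest hxy with ⟨σ, rfl, rfl⟩ | ⟨f, f₁, rfl, rfl, h3⟩ | ⟨v, a, a₁, rfl, rfl, h3⟩ | ⟨a, a₁, rfl, rfl, h3⟩ <;>
    rcases bisim_dest hyz with ⟨σ', h1', h2'⟩ | ⟨g, g₁, h1', h2', h3'⟩ | ⟨v', b, b₁, h1', h2', h3'⟩ | ⟨b, b₁, h1', h2', h3'⟩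
  · exact Or.inl ⟨σ, rfl, by rw [← ret_inj h1'] at h2'; exact h2'⟩
  · exact absurd h1' (fun q => ret_ne_inp q)
  · exact absurd h1' (fun q => ret_ne_out q)
  · exact absurd h1' (fun q => ret_ne_delay q)
  · exact absurd h1'.symm (fun q => ret_ne_inp q)
  · refine Or.inr (Or.inl ⟨f, g₁, rfl, h2', fun v => ⟨g v, ?_, h3' v⟩⟩)
    rw [← inp_inj h1']; exact h3 v
  · exact absurd h1' (fun q => inp_ne_out q)
  · exact absurd h1' (fun q => inp_ne_delay q)
  · exact absurd h1'.symm (fun q => ret_ne_out q)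
  · exact absurd h1'.symm (fun q => inp_ne_out q)
  · obtain ⟨hv, ha⟩ := out_inj h1'
    subst hv
    exact Or.inr (Or.inr (Or.inl ⟨v, a, b₁, rfl, h2', b, by rw [← ha]; exact h3, h3'⟩))
  · exact absurd h1' (fun q => out_ne_delay q)
  · exact absurd h1'.symm (fun q => ret_ne_delay q)
  · exact absurd h1'.symm (fun q => inp_ne_delay q)
  · exact absurd h1'.symm (fun q => out_ne_delay q)
  · exact Or.inr (Or.inr (Or.inr ⟨a, b₁, rfl, h2', b, by rw [← delay_inj h1']; exact h3, h3'⟩))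

end BisimLemmas
lemma Conv.inv {r d : Res} (h : Conv r d) :
    (∃ σ, r = Res.ret σ ∧ d = Res.ret σ) ∨
    (∃ f f₁, r = Res.inp f ∧ d = Res.inp f₁ ∧ ∀ v, Bisim (f v) (f₁ v)) ∨
    (∃ v a a₁, r = Res.out v a ∧ d = Res.out v a₁ ∧ Bisim a a₁) ∨
    (∃ a, r = Res.delay a ∧ Conv a d) := by
  cases h with
  | ret σ => exact Or.inl ⟨σ, rfl, rfl⟩
  | inp hb => exact Or.inr (Or.inl ⟨_, _, rfl, rfl, hb⟩)
  | out hb => exact Or.inr (Or.inr (Or.inl ⟨_, _, _, rfl, rfl, hb⟩))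
  | delay hc => exact Or.inr (Or.inr (Or.inr ⟨_, rfl, hc⟩))
section ConvLemmas

/-- Relation between two converged values: same head, bisimilar components. -/
def ConvRel (d d₁ : Res) : Prop :=
  (∃ σ, d = Res.ret σ ∧ d₁ = Res.ret σ) ∨
  (∃ f f₁, d = Res.inp f ∧ d₁ = Res.inp f₁ ∧ ∀ v, Bisim (f v) (f₁ v)) ∨
  (∃ v a a₁, d = Res.out v a ∧ d₁ = Res.out v a₁ ∧ Bisim a a₁)

lemma convRel_of_conv {r d : Res} (h : Conv r d) : ∃ d₀, ConvRel d₀ d := by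
  induction h with
  | ret σ => exact ⟨_, Or.inl ⟨σ, rfl, rfl⟩⟩
  | @inp f f₁ hb => exact ⟨_, Or.inr (Or.inl ⟨f, f₁, rfl, rfl, hb⟩)⟩
  | @out v a a₁ hb => exact ⟨_, Or.inr (Or.inr ⟨v, a, a₁, rfl, rfl, hb⟩)⟩
  | delay _ ih => exact ih

/-- Convergence can be transported along strong bisimilarity (left arg). -/
lemma conv_bisim_left {r r' d : Res} (h : Conv r d) (hb : Bisim r r') :
    ∃ d', Conv r' d' ∧ ConvRel d d' := by
  induction h generalizing r' with
  | ret σ =>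
      rcases bisim_dest hb with ⟨σ', h1, h2⟩ | ⟨f, f₁, h1, _, _⟩ | ⟨v, a, a₁, h1, _, _⟩ | ⟨a, a₁, h1, _, _⟩
      · rw [ret_inj h1] at *
        exact ⟨Res.ret σ', h2 ▸ Conv.ret σ', Or.inl ⟨σ', rfl, rfl⟩⟩
      · exact absurd h1 ret_ne_inp
      · exact absurd h1 ret_ne_out
      · exact absurd h1 ret_ne_delay
  | @inp f f₁ h3 =>
      rcases bisim_dest hb with ⟨σ', h1, _⟩ | ⟨g, g₁, h1, h2, h3'⟩ | ⟨v, a, a₁, h1, _, _⟩ | ⟨a, a₁, h1, _, _⟩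
      · exact absurd h1.symm ret_ne_inp
      · refine ⟨Res.inp g₁, h2 ▸ Conv.inp (fun v => bisim_refl _), Or.inr (Or.inl ⟨f₁, g₁, rfl, rfl, fun v => ?_⟩)⟩
        have : f v = g v := congrFun (inp_inj h1) v
        exact bisim_trans (bisim_symm (h3 v)) (this ▸ h3' v)
      · exact absurd h1 inp_ne_out
      · exact absurd h1 inp_ne_delay
  | @out v a a₁ h3 =>
      rcases bisim_dest hb with ⟨σ', h1, _⟩ | ⟨g, g₁, h1, _, _⟩ | ⟨v', b, b₁, h1, h2, h3'⟩ | ⟨b, b₁, h1, _, _⟩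
      · exact absurd h1.symm ret_ne_out
      · exact absurd h1.symm inp_ne_out
      · obtain ⟨hv, ha⟩ := out_inj h1
        subst hv
        refine ⟨Res.out v b₁, h2 ▸ Conv.out (bisim_refl _), Or.inr (Or.inr ⟨v, a₁, b₁, rfl, rfl, ?_⟩)⟩
        exact bisim_trans (bisim_symm h3) (ha ▸ h3')
      · exact absurd h1 out_ne_delay
  | @delay a d hc ih =>
      rcases bisim_dest hb with ⟨σ', h1, _⟩ | ⟨g, g₁, h1, _, _⟩ | ⟨v', b, b₁, h1, _, _⟩ | ⟨b, b₁, h1, h2, h3'⟩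
      · exact absurd h1.symm ret_ne_delay
      · exact absurd h1.symm inp_ne_delay
      · exact absurd h1.symm out_ne_delay
      · obtain ⟨d', hc', hr⟩ := ih ((delay_inj h1) ▸ h3')
        exact ⟨d', h2 ▸ Conv.delay hc', hr⟩

/-- Convergence is respected by ConvRel on the target: if Conv r d and ConvRel d d'
then Conv r d'. -/
lemma conv_convRel {r d d' : Res} (h : Conv r d) (hr : ConvRel d d') : Conv r d' := by
  induction h with
  | ret σ =>
      rcases hr with ⟨σ', h1, h2⟩ | ⟨f, f₁, h1, _, _⟩ | ⟨v, a, a₁, h1, _, _⟩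
      · rw [h2, ← ret_inj h1]; exact Conv.ret σ
      · exact absurd h1 ret_ne_inp
      · exact absurd h1 ret_ne_out
  | @inp f f₁ h3 =>
      rcases hr with ⟨σ', h1, _⟩ | ⟨g, g₁, h1, h2, h3'⟩ | ⟨v, a, a₁, h1, _, _⟩
      · exact absurd h1.symm ret_ne_inp
      · rw [h2]
        exact Conv.inp (fun v => bisim_trans (h3 v) ((inp_inj h1) ▸ h3' v))
      · exact absurd h1 inp_ne_out
  | @out v a a₁ h3 =>
      rcases hr with ⟨σ', h1, _⟩ | ⟨g, g₁, h1, _, _⟩ | ⟨v', b, b₁, h1, h2, h3'⟩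
      · exact absurd h1.symm ret_ne_out
      · exact absurd h1.symm inp_ne_out
      · obtain ⟨hv, ha⟩ := out_inj h1
        subst hv
        rw [h2]
        exact Conv.out (bisim_trans h3 (ha ▸ h3'))
  | delay _ ih => exact Conv.delay (ih hr)

lemma convRel_symm {d d' : Res} (h : ConvRel d d') : ConvRel d' d := by
  rcases h with ⟨σ, h1, h2⟩ | ⟨f, f₁, h1, h2, h3⟩ | ⟨v, a, a₁, h1, h2, h3⟩
  · exact Or.inl ⟨σ, h2, h1⟩
  · exact Or.inr (Or.inl ⟨f₁, f, h2, h1, fun v => bisim_symm (h3 v)⟩)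
  · exact Or.inr (Or.inr ⟨v, a₁, a, h2, h1, bisim_symm h3⟩)

lemma convRel_trans {d d' d'' : Res} (h : ConvRel d d') (h' : ConvRel d' d'') :
    ConvRel d d'' := by
  rcases h with ⟨σ, h1, h2⟩ | ⟨f, f₁, h1, h2, h3⟩ | ⟨v, a, a₁, h1, h2, h3⟩ <;>
    rcases h' with ⟨σ', h1', h2'⟩ | ⟨g, g₁, h1', h2', h3'⟩ | ⟨v', b, b₁, h1', h2', h3'⟩ <;>
      subst h1 <;> subst h2
  · exact Or.inl ⟨σ, rfl, (ret_inj h1') ▸ h2'⟩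
  · exact absurd h1' ret_ne_inp
  · exact absurd h1' ret_ne_out
  · exact absurd h1'.symm ret_ne_inp
  · refine Or.inr (Or.inl ⟨f, g₁, rfl, h2', fun v => bisim_trans (h3 v) (((inp_inj h1') ▸ h3' v))⟩)
  · exact absurd h1' inp_ne_out
  · exact absurd h1'.symm ret_ne_out
  · exact absurd h1'.symm inp_ne_out
  · obtain ⟨hv, ha⟩ := out_inj h1'
    subst hv
    exact Or.inr (Or.inr ⟨v, a, b₁, rfl, h2', bisim_trans h3 (ha ▸ h3')⟩)

/-- Determinism of convergence up to ConvRel. -/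
lemma conv_det {r d d₁ : Res} (h : Conv r d) (h₁ : Conv r d₁) : ConvRel d d₁ := by
  induction h generalizing d₁ with
  | ret σ =>
      rcases Conv.inv h₁ with ⟨σ', h1, h2⟩ | ⟨f, f₁, h1, _, _⟩ | ⟨v, a, a₁, h1, _, _⟩ | ⟨a, h1, _⟩
      · exact Or.inl ⟨σ, rfl, (ret_inj h1) ▸ h2⟩
      · exact absurd h1 ret_ne_inp
      · exact absurd h1 ret_ne_out
      · exact absurd h1 ret_ne_delay
  | @inp f f₁ h3 =>
      rcases Conv.inv h₁ with ⟨σ', h1, _⟩ | ⟨g, g₁, h1, h2, h3'⟩ | ⟨v, a, a₁, h1, _, _⟩ | ⟨a, h1, _⟩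
      · exact absurd h1.symm ret_ne_inp
      · exact Or.inr (Or.inl ⟨f₁, g₁, rfl, h2, fun v =>
          bisim_trans (bisim_symm (h3 v)) ((inp_inj h1) ▸ h3' v)⟩)
      · exact absurd h1 inp_ne_out
      · exact absurd h1 inp_ne_delay
  | @out v a a₁ h3 =>
      rcases Conv.inv h₁ with ⟨σ', h1, _⟩ | ⟨g, g₁, h1, _, _⟩ | ⟨v', b, b₁, h1, h2, h3'⟩ | ⟨b, h1, _⟩
      · exact absurd h1.symm ret_ne_out
      · exact absurd h1.symm inp_ne_out
      · obtain ⟨hv, ha⟩ := out_inj h1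
        subst hv
        exact Or.inr (Or.inr ⟨v, a₁, b₁, rfl, h2, bisim_trans (bisim_symm h3) (ha ▸ h3')⟩)
      · exact absurd h1 out_ne_delay
  | @delay a d hc ih =>
      rcases Conv.inv h₁ with ⟨σ', h1, _⟩ | ⟨g, g₁, h1, _, _⟩ | ⟨v', b, b₁, h1, _, _⟩ | ⟨b, h1, h2⟩
      · exact absurd h1.symm ret_ne_delay
      · exact absurd h1.symm inp_ne_delay
      · exact absurd h1.symm out_ne_delay
      · exact ih ((delay_inj h1) ▸ h2)

end ConvLemmas
section DivLemmas

lemma diverge_delay_inv {r : Res} (h : Diverge r) : ∃ a, r = Res.delay a ∧ Diverge a := by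
  obtain ⟨P, hP, hr⟩ := h
  obtain ⟨a, ha, hPa⟩ := hP _ hr
  exact ⟨a, ha, P, hP, hPa⟩

lemma diverge_bisim {r r' : Res} (hb : Bisim r r') (h : Diverge r) : Diverge r' := by
  refine ⟨fun y => ∃ x, Bisim x y ∧ Diverge x, fun y ⟨x, hxy, hx⟩ => ?_, r, hb, h⟩
  obtain ⟨a, rfl, ha⟩ := diverge_delay_inv hx
  rcases bisim_dest hxy with ⟨σ, h1, _⟩ | ⟨f, f₁, h1, _, _⟩ | ⟨v, b, b₁, h1, _, _⟩ | ⟨b, b₁, h1, h2, h3⟩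
  · exact absurd h1.symm ret_ne_delay
  · exact absurd h1.symm inp_ne_delay
  · exact absurd h1.symm out_ne_delay
  · exact ⟨b₁, h2, a, (delay_inj h1) ▸ h3, ha⟩

lemma conv_not_diverge {r d : Res} (h : Conv r d) (hd : Diverge r) : False := by
  induction h with
  | ret σ => obtain ⟨a, ha, _⟩ := diverge_delay_inv hd; exact ret_ne_delay ha
  | inp _ => obtain ⟨a, ha, _⟩ := diverge_delay_inv hd; exact inp_ne_delay ha
  | out _ => obtain ⟨a, ha, _⟩ := diverge_delay_inv hd; exact out_ne_delay ha
  | delay _ ih =>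
      obtain ⟨a, ha, hdiv⟩ := diverge_delay_inv hd
      exact ih ((delay_inj ha) ▸ hdiv)

/-- Classical totality: every resumption converges or diverges. -/
lemma conv_or_diverge (r : Res) : (∃ d, Conv r d) ∨ Diverge r := by
  by_cases h : ∃ d, Conv r d
  · exact Or.inl h
  · refine Or.inr ⟨fun x => ¬∃ d, Conv x d, fun x hx => ?_, h⟩
    rcases res_cases x with ⟨σ, rfl⟩ | ⟨f, rfl⟩ | ⟨v, a, rfl⟩ | ⟨a, rfl⟩
    · exact absurd ⟨_, Conv.ret σ⟩ hx
    · exact absurd ⟨_, Conv.inp (fun v => bisim_refl (f v))⟩ hx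
    · exact absurd ⟨_, Conv.out (bisim_refl a)⟩ hx
    · exact ⟨a, rfl, fun ⟨d, hc⟩ => hx ⟨d, Conv.delay hc⟩⟩

end DivLemmas

section WCl

lemma wbisimCl_dest {r r₁ : Res} (h : WBisimCl r r₁) : WBisimClF WBisimCl r r₁ := by
  obtain ⟨R, hR, hr⟩ := h
  have mono : ∀ x y, R x y → WBisimCl x y := fun x y hxy => ⟨R, hR, hxy⟩
  rcases hR _ _ hr with h | ⟨v, a, a₁, h1, h2, h3⟩ | ⟨f, f₁, h1, h2, h3⟩ | h
  · exact Or.inl h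
  · exact Or.inr (Or.inl ⟨v, a, a₁, h1, h2, mono _ _ h3⟩)
  · exact Or.inr (Or.inr (Or.inl ⟨f, f₁, h1, h2, fun v => mono _ _ (h3 v)⟩))
  · exact Or.inr (Or.inr (Or.inr h))

/-- (iii) strong bisimilarity implies classical weak bisimilarity. -/
lemma wbisimCl_of_bisim {r r₁ : Res} (h : Bisim r r₁) : WBisimCl r r₁ := by
  refine ⟨Bisim, fun x y hxy => ?_, h⟩
  rcases conv_or_diverge x with ⟨d, hc⟩ | hdiv
  · obtain ⟨d', hc', hrel⟩ := conv_bisim_left hc hxy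
    rcases hrel with ⟨σ, rfl, rfl⟩ | ⟨f, f₁, rfl, rfl, h3⟩ | ⟨v, a, a₁, rfl, rfl, h3⟩
    · exact Or.inl ⟨σ, hc, hc'⟩
    · exact Or.inr (Or.inr (Or.inl ⟨f, f₁, hc, hc', h3⟩))
    · exact Or.inr (Or.inl ⟨v, a, a₁, hc, hc', h3⟩)
  · exact Or.inr (Or.inr (Or.inr ⟨hdiv, diverge_bisim hxy hdiv⟩))

/-- (i) setoid-ness: ≈c is invariant under ≅ on both sides. -/
lemma wbisimCl_bisim {r r' r₁ r₁' : Res} (hb : Bisim r r') (hw : WBisimCl r r₁)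
    (hb₁ : Bisim r₁ r₁') : WBisimCl r' r₁' := by
  refine ⟨fun x' y' => ∃ x y, Bisim x x' ∧ WBisimCl x y ∧ Bisim y y',
    fun x' y' ⟨x, y, hx, hxy, hy⟩ => ?_, r, r₁, hb, hw, hb₁⟩
  rcases wbisimCl_dest hxy with ⟨σ, hcx, hcy⟩ | ⟨v, a, a₁, hcx, hcy, h3⟩ |
      ⟨f, f₁, hcx, hcy, h3⟩ | ⟨hdx, hdy⟩
  · obtain ⟨d', hc', hrel⟩ := conv_bisim_left hcx hx
    obtain ⟨e', he', hrel'⟩ := conv_bisim_left hcy hy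
    rcases hrel with ⟨σ', h1a, rfl⟩ | ⟨_, _, h1, _, _⟩ | ⟨_, _, _, h1, _, _⟩
    · rcases hrel' with ⟨σ'', h2a, rfl⟩ | ⟨_, _, h1, _, _⟩ | ⟨_, _, _, h1, _, _⟩
      · refine Or.inl ⟨σ', hc', ?_⟩
        have hσ : σ' = σ'' := (ret_inj h1a).symm.trans (ret_inj h2a)
        rw [hσ]; exact he'
      · exact absurd h1 ret_ne_inp
      · exact absurd h1 ret_ne_out
    · exact absurd h1 ret_ne_inp
    · exact absurd h1 ret_ne_out
  · obtain ⟨d', hc', hrel⟩ := conv_bisim_left hcx hx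
    obtain ⟨e', he', hrel'⟩ := conv_bisim_left hcy hy
    rcases hrel with ⟨_, h1, _⟩ | ⟨_, _, h1, _, _⟩ | ⟨v', b, b', h1, rfl, h3x⟩
    · exact absurd h1 out_ne_ret
    · exact absurd h1 out_ne_inp
    · rcases hrel' with ⟨_, h1', _⟩ | ⟨_, _, h1', _, _⟩ | ⟨v'', c, c', h1', rfl, h3y⟩
      · exact absurd h1' out_ne_ret
      · exact absurd h1' out_ne_inp
      · obtain ⟨hv, haa⟩ := out_inj h1
        obtain ⟨hv', hcc⟩ := out_inj h1'
        subst hv; subst hv'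
        refine Or.inr (Or.inl ⟨v, b', c', hc', he', a, a₁, ?_, h3, ?_⟩)
        · rw [haa]; exact h3x
        · rw [hcc]; exact h3y
  · obtain ⟨d', hc', hrel⟩ := conv_bisim_left hcx hx
    obtain ⟨e', he', hrel'⟩ := conv_bisim_left hcy hy
    rcases hrel with ⟨_, h1, _⟩ | ⟨g, g', h1, rfl, h3x⟩ | ⟨_, _, _, h1, _, _⟩
    · exact absurd h1 inp_ne_ret
    · rcases hrel' with ⟨_, h1', _⟩ | ⟨k, k', h1', rfl, h3y⟩ | ⟨_, _, _, h1', _, _⟩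
      · exact absurd h1' inp_ne_ret
      · refine Or.inr (Or.inr (Or.inl ⟨g', k', hc', he', fun v => ⟨f v, f₁ v, ?_, h3 v, ?_⟩⟩))
        · rw [congrFun (inp_inj h1) v]; exact h3x v
        · rw [congrFun (inp_inj h1') v]; exact h3y v
      · exact absurd h1' inp_ne_out
    · exact absurd h1 inp_ne_out
  · exact Or.inr (Or.inr (Or.inr ⟨diverge_bisim hx hdx, diverge_bisim hy hdy⟩))

end WCl
section Det

lemma conv_ret_ret {y : Res} {σ σ'} (h1 : Conv y (Res.ret σ)) (h2 : Conv y (Res.ret σ')) :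
    σ = σ' := by
  rcases conv_det h1 h2 with ⟨σ0, e1, e2⟩ | ⟨_, _, e1, _, _⟩ | ⟨_, _, _, e1, _, _⟩
  · exact (ret_inj e1).trans (ret_inj e2).symm
  · exact absurd e1 ret_ne_inp
  · exact absurd e1 ret_ne_out

lemma conv_out_out {y : Res} {v v' a b} (h1 : Conv y (Res.out v a))
    (h2 : Conv y (Res.out v' b)) : v = v' ∧ Bisim a b := by
  rcases conv_det h1 h2 with ⟨σ0, e1, e2⟩ | ⟨_, _, e1, _, _⟩ | ⟨v0, c, c₁, e1, e2, hb⟩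
  · exact absurd e1 out_ne_ret
  · exact absurd e1 out_ne_inp
  · obtain ⟨hv, ha⟩ := out_inj e1
    obtain ⟨hv', hb'⟩ := out_inj e2
    exact ⟨hv.trans hv'.symm, by rw [ha, hb']; exact hb⟩

lemma conv_inp_inp {y : Res} {f g} (h1 : Conv y (Res.inp f)) (h2 : Conv y (Res.inp g)) :
    ∀ v, Bisim (f v) (g v) := by
  rcases conv_det h1 h2 with ⟨σ0, e1, e2⟩ | ⟨f0, f1, e1, e2, hb⟩ | ⟨_, _, _, e1, _, _⟩
  · exact absurd e1 inp_ne_ret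
  · intro v
    rw [congrFun (inp_inj e1) v, congrFun (inp_inj e2) v]
    exact hb v
  · exact absurd e1 inp_ne_out

lemma conv_ret_out {y : Res} {σ v a} (h1 : Conv y (Res.ret σ)) (h2 : Conv y (Res.out v a)) :
    False := by
  rcases conv_det h1 h2 with ⟨_, _, e2⟩ | ⟨_, _, e1, _, _⟩ | ⟨_, _, _, e1, _, _⟩
  · exact out_ne_ret e2
  · exact ret_ne_inp e1
  · exact ret_ne_out e1

lemma conv_ret_inp {y : Res} {σ f} (h1 : Conv y (Res.ret σ)) (h2 : Conv y (Res.inp f)) :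
    False := by
  rcases conv_det h1 h2 with ⟨_, _, e2⟩ | ⟨_, _, e1, _, _⟩ | ⟨_, _, _, e1, _, _⟩
  · exact inp_ne_ret e2
  · exact ret_ne_inp e1
  · exact ret_ne_out e1

lemma conv_out_inp {y : Res} {v a f} (h1 : Conv y (Res.out v a)) (h2 : Conv y (Res.inp f)) :
    False := by
  rcases conv_det h1 h2 with ⟨_, e1, _⟩ | ⟨_, _, e1, _, _⟩ | ⟨_, _, _, _, e2, _⟩
  · exact out_ne_ret e1
  · exact out_ne_inp e1
  · exact inp_ne_out e2

end Det

section Equiv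

lemma wbisimCl_refl (r : Res) : WBisimCl r r := wbisimCl_of_bisim (bisim_refl r)

lemma wbisimCl_symm {r r₁ : Res} (h : WBisimCl r r₁) : WBisimCl r₁ r := by
  refine ⟨fun x y => WBisimCl y x, fun x y hxy => ?_, h⟩
  rcases wbisimCl_dest hxy with ⟨σ, h1, h2⟩ | ⟨v, a, a₁, h1, h2, h3⟩ |
      ⟨f, f₁, h1, h2, h3⟩ | ⟨h1, h2⟩
  · exact Or.inl ⟨σ, h2, h1⟩
  · exact Or.inr (Or.inl ⟨v, a₁, a, h2, h1, h3⟩)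
  · exact Or.inr (Or.inr (Or.inl ⟨f₁, f, h2, h1, fun v => h3 v⟩))
  · exact Or.inr (Or.inr (Or.inr ⟨h2, h1⟩))

lemma wbisimCl_trans {r r₁ r₂ : Res} (h : WBisimCl r r₁) (h' : WBisimCl r₁ r₂) :
    WBisimCl r r₂ := by
  refine ⟨fun x z => ∃ y, WBisimCl x y ∧ WBisimCl y z,
    fun x z ⟨y, hxy, hyz⟩ => ?_, r₁, h, h'⟩
  rcases wbisimCl_dest hxy with ⟨σ, hx1, hy1⟩ | ⟨v, a, a₁, hx1, hy1, h3⟩ |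
      ⟨f, f₁, hx1, hy1, h3⟩ | ⟨hdx, hdy⟩ <;>
    rcases wbisimCl_dest hyz with ⟨σ', hy2, hz2⟩ | ⟨v', b, b₁, hy2, hz2, h3'⟩ |
      ⟨g, g₁, hy2, hz2, h3'⟩ | ⟨hdy', hdz⟩
  · exact Or.inl ⟨σ, hx1, (conv_ret_ret hy1 hy2) ▸ hz2⟩
  · exact absurd (conv_ret_out hy1 hy2) id
  · exact absurd (conv_ret_inp hy1 hy2) id
  · exact absurd (conv_not_diverge hy1 hdy') id
  · exact absurd (conv_ret_out hy2 hy1) id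
  · obtain ⟨hv, hab⟩ := conv_out_out hy1 hy2
    subst hv
    exact Or.inr (Or.inl ⟨v, a, b₁, hx1, hz2,
      b, wbisimCl_bisim (bisim_refl a) h3 hab, h3'⟩)
  · exact absurd (conv_out_inp hy1 hy2) id
  · exact absurd (conv_not_diverge hy1 hdy') id
  · exact absurd (conv_ret_inp hy2 hy1) id
  · exact absurd (conv_out_inp hy2 hy1) id
  · refine Or.inr (Or.inr (Or.inl ⟨f, g₁, hx1, hz2, fun v =>
      ⟨g v, wbisimCl_bisim (bisim_refl (f v)) (h3 v) (conv_inp_inp hy1 hy2 v), h3' v⟩⟩))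
  · exact absurd (conv_not_diverge hy1 hdy') id
  · exact absurd (conv_not_diverge hy2 hdy) id
  · exact absurd (conv_not_diverge hy2 hdy) id
  · exact absurd (conv_not_diverge hy2 hdy) id
  · exact Or.inr (Or.inr (Or.inr ⟨hdx, hdz⟩))

end Equiv
/-- Classical-style weak bisimilarity is a setoid predicate and an
equivalence relation weaker than strong bisimilarity. -/
theorem wbisimCl_setoid_equiv_weaker :
    (∀ r r' r₁ r₁' : Res, Bisim r r' → WBisimCl r r₁ → Bisim r₁ r₁' → WBisimCl r' r₁') ∧
    Equivalence WBisimCl ∧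
    (∀ r r₁ : Res, Bisim r r₁ → WBisimCl r r₁) := by
  exact ⟨fun r r' r₁ r₁' hb hw hb₁ => wbisimCl_bisim hb hw hb₁,
    ⟨wbisimCl_refl, fun h => wbisimCl_symm h, fun h h' => wbisimCl_trans h h'⟩,
    fun r r₁ h => wbisimCl_of_bisim h⟩
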